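/- arXiv:2407.01448 — 2 statements merged into one kernel-verified Lean document; each statement's English description precedes it below -/
import Mathlib

section
/- Let σ ∈ S_n with ℓ(σ) = k, and set Inv(σ) = {(i,j) : 1 ≤ i < j ≤ n, σ⁻¹(i) > σ⁻¹(j)} (so |Inv(σ)| = k). For a function t : Inv(σ) → {0, 1, …, p-1} let u(t) = ∏_{(i,j) ∈ Inv(σ)} (I + t_{ij}·E_{ij}), the product taken in a fixed order. Then the double coset J·w_σ·J is the union over all such t of the left cosets u(t)·w_σ·J, and these p^k left cosets of J are pairwise distinct. -/
open Matrix MeasureTheory Pointwise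

variable (p n : ℕ) [Fact p.Prime]

/-- The `(i,j)` entry of an element of `GL n ℚ_[p]`. -/
def entry (g : GL (Fin n) ℚ_[p]) (i j : Fin n) : ℚ_[p] :=
  (g : Matrix (Fin n) (Fin n) ℚ_[p]) i j

/-- The Iwahori subgroup `J`, as a subset of `GL n ℚ_[p]`: matrices of `GL_n(ℤ_p)`
(integral matrix with integral inverse) whose entries strictly below the diagonal
lie in `pℤ_p` (i.e. have norm `< 1`). -/
def Jset : Set (GL (Fin n) ℚ_[p]) :=
  {g | (∀ i j, ‖entry p n g i j‖ ≤ 1) ∧ (∀ i j, ‖entry p n g⁻¹ i j‖ ≤ 1) ∧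
       ∀ i j : Fin n, j < i → ‖entry p n g i j‖ < 1}

/-- The diagonal torus `T`. -/
def Tset : Set (GL (Fin n) ℚ_[p]) :=
  {g | ∀ i j : Fin n, i ≠ j → entry p n g i j = 0}

/-- The group `N` of upper unitriangular matrices. -/
def Nset : Set (GL (Fin n) ℚ_[p]) :=
  {g | (∀ i : Fin n, entry p n g i i = 1) ∧ ∀ i j : Fin n, j < i → entry p n g i j = 0}

/-- The upper triangular Borel subgroup `B`. -/
def Bset : Set (GL (Fin n) ℚ_[p]) :=
  {g | ∀ i j : Fin n, j < i → entry p n g i j = 0}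

/-- Permutation matrix `w_σ` of `σ` as an element of `GL n ℚ_[p]`, in the convention
`w_σ · e_j = e_{σ(j)}` (entries `(w_σ)_{ij} = δ_{i, σ(j)}`). -/
noncomputable def permGL (σ : Equiv.Perm (Fin n)) : GL (Fin n) ℚ_[p] :=
  Matrix.GeneralLinearGroup.mkOfDetNeZero ((σ.permMatrix ℚ_[p])ᵀ) (by
    rw [Matrix.det_transpose, Matrix.det_permutation]
    exact_mod_cast Int.cast_ne_zero.mpr (Equiv.Perm.sign σ).ne_zero)

/-- The elementary matrix `I + t·E_{ij}` as an element of `GL n ℚ_[p]`. -/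
noncomputable def elemGL (i j : Fin n) (hij : i ≠ j) (t : ℚ_[p]) : GL (Fin n) ℚ_[p] :=
  Matrix.GeneralLinearGroup.mkOfDetNeZero (Matrix.transvection i j t) (by
    rw [Matrix.det_transvection_of_ne i j hij]
    exact one_ne_zero)

/-- The set of inversions `Inv(σ) = {(i,j) : i < j, σ⁻¹ i > σ⁻¹ j}`. -/
def InvSet (σ : Equiv.Perm (Fin n)) : Finset (Fin n × Fin n) :=
  Finset.univ.filter fun ij => ij.1 < ij.2 ∧ σ⁻¹ ij.2 < σ⁻¹ ij.1

/-- The length `ℓ(σ)` (number of inversions) of `σ`. -/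
def len (σ : Equiv.Perm (Fin n)) : ℕ := (InvSet n σ).card

/-- `i+1` as an element of `Fin n`. -/
def finSucc (i : Fin n) (h : (i : ℕ) + 1 < n) : Fin n := ⟨(i : ℕ) + 1, h⟩

theorem finSucc_ne (i : Fin n) (h : (i : ℕ) + 1 < n) : i ≠ finSucc n i h := by
  simp [finSucc, Fin.ext_iff]

/-- The value of `χδ_B` at `b`, defined through the diagonal entries of `b`:
`(χδ_B)(b) = ∏_{i=1}^n z_i^{v(b_i)} p^{-(n+1-2i) v(b_i)}`. -/
noncomputable def chiDelta (z : Fin n → ℂˣ) (d : GL (Fin n) ℚ_[p]) : ℂ :=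
  ∏ i : Fin n, ((z i : ℂ) ^ (entry p n d i i).valuation *
    (p : ℂ) ^ (-(((n : ℤ) + 1) - 2 * ((i : ℕ) + 1 : ℤ)) * (entry p n d i i).valuation))

/-- The character `ψ(u) = ∏_{i=1}^{n-1} ψ₀(u_{i,i+1})` of `N`, built from an additive
character `ψ₀` of `ℚ_p`. -/
noncomputable def psiN (ψ₀ : ℚ_[p] → ℂ) (u : GL (Fin n) ℚ_[p]) : ℂ :=
  ∏ i : Fin n, if h : (i : ℕ) + 1 < n then ψ₀ (entry p n u i (finSucc n i h)) else 1

/-- `λ(d)` is `σ`-dominant: for all adjacent indices,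
`v(d_i) - v(d_{i+1}) ≥ 0` if `σ⁻¹ i < σ⁻¹(i+1)`, and `≥ -1` if `σ⁻¹ i > σ⁻¹(i+1)`. -/
def IsDom (σ : Equiv.Perm (Fin n)) (d : GL (Fin n) ℚ_[p]) : Prop :=
  ∀ (i : Fin n) (h : (i : ℕ) + 1 < n),
    (σ⁻¹ i < σ⁻¹ (finSucc n i h) →
      0 ≤ (entry p n d i i).valuation
            - (entry p n d (finSucc n i h) (finSucc n i h)).valuation) ∧
    (σ⁻¹ (finSucc n i h) < σ⁻¹ i →
      -1 ≤ (entry p n d i i).valuation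
            - (entry p n d (finSucc n i h) (finSucc n i h)).valuation)

/-- The dominant part `T⁺` of the diagonal torus: `v(d_1) ≥ … ≥ v(d_n)`. -/
def Tplus : Set (GL (Fin n) ℚ_[p]) :=
  {d | d ∈ Tset p n ∧ Antitone fun i : Fin n => (entry p n d i i).valuation}

/-- The double coset `J g J`. -/
def dcos (g : GL (Fin n) ℚ_[p]) : Set (GL (Fin n) ℚ_[p]) :=
  {x | ∃ a ∈ Jset p n, ∃ b ∈ Jset p n, x = a * g * b}
/-- The ordered product `u(t) = ∏_{(i,j) ∈ Inv(σ)} (I + t_{ij}·E_{ij})`, the product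
taken in a fixed (row-major) order. -/
noncomputable def uMat (σ : Equiv.Perm (Fin n))
    (t : {ij : Fin n × Fin n // ij ∈ InvSet n σ} → Fin p) : GL (Fin n) ℚ_[p] :=
  (((List.finRange n) ×ˢ (List.finRange n)).map fun ij =>
    if h : ij ∈ InvSet n σ then
      elemGL p n ij.1 ij.2 (ne_of_lt (Finset.mem_filter.mp h).2.1)
        (((t ⟨ij, h⟩ : ℕ) : ℚ_[p]))
    else 1).prod

section AuxIwahori

variable {q : ℕ} [hq : Fact q.Prime]

lemma aux_norm_sum_le {ι : Type*} (s : Finset ι) (f : ι → ℚ_[q]) {C : ℝ} (hC : 0 ≤ C) :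
    (∀ i ∈ s, ‖f i‖ ≤ C) → ‖∑ i ∈ s, f i‖ ≤ C := by
  classical
  induction s using Finset.cons_induction with
  | empty => intro _; simpa using hC
  | cons a s ha ih =>
    intro h
    rw [Finset.sum_cons]
    exact le_trans (Padic.nonarchimedean _ _)
      (max_le (h a (Finset.mem_cons_self a s)) (ih fun i hi => h i (Finset.mem_cons.2 (Or.inr hi))))

lemma aux_norm_sum_lt {ι : Type*} (s : Finset ι) (f : ι → ℚ_[q]) {C : ℝ} (hC : 0 < C) :
    (∀ i ∈ s, ‖f i‖ < C) → ‖∑ i ∈ s, f i‖ < C := by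
  classical
  induction s using Finset.cons_induction with
  | empty => intro _; simpa using hC
  | cons a s ha ih =>
    intro h
    rw [Finset.sum_cons]
    exact lt_of_le_of_lt (Padic.nonarchimedean _ _)
      (max_lt (h a (Finset.mem_cons_self a s)) (ih fun i hi => h i (Finset.mem_cons.2 (Or.inr hi))))

lemma aux_norm_sub_le_max (a b : ℚ_[q]) : ‖a - b‖ ≤ max ‖a‖ ‖b‖ := by
  rw [sub_eq_add_neg]
  simpa [norm_neg] using Padic.nonarchimedean a (-b)

lemma aux_nat_norm_le_one (m : ℕ) : ‖((m : ℕ) : ℚ_[q])‖ ≤ 1 := by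
  rw [← Int.cast_natCast]
  exact Padic.norm_int_le_one _

lemma aux_exists_rep {x : ℚ_[q]} (hx : ‖x‖ ≤ 1) : ∃ s : Fin q, ‖x - ((s : ℕ) : ℚ_[q])‖ < 1 := by
  set z : ℤ_[q] := ⟨x, hx⟩ with hz
  refine ⟨⟨PadicInt.zmodRepr z, PadicInt.zmodRepr_lt_p z⟩, ?_⟩
  have h := PadicInt.sub_zmodRepr_mem z
  rw [IsLocalRing.mem_maximalIdeal, PadicInt.mem_nonunits] at h
  have : ‖z - ((PadicInt.zmodRepr z : ℕ) : ℤ_[q])‖ = ‖x - ((PadicInt.zmodRepr z : ℕ) : ℚ_[q])‖ := by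
    rw [PadicInt.norm_def, PadicInt.coe_sub, PadicInt.coe_natCast, hz]
  rw [this] at h
  exact h

lemma aux_exists_rep_mul {x y : ℚ_[q]} (hx : ‖x‖ ≤ 1) (hy : ‖y‖ = 1) :
    ∃ s : Fin q, ‖x - ((s : ℕ) : ℚ_[q]) * y‖ < 1 := by
  have hy0 : y ≠ 0 := by intro h; rw [h] at hy; simp at hy
  obtain ⟨s, hs⟩ := aux_exists_rep (x := x * y⁻¹)
    (by rw [norm_mul, norm_inv, hy]; simpa using hx)
  refine ⟨s, ?_⟩
  have hxy : x - ((s : ℕ) : ℚ_[q]) * y = (x * y⁻¹ - ((s : ℕ) : ℚ_[q])) * y := by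
    field_simp
  rw [hxy, norm_mul, hy, mul_one]
  exact hs

end AuxIwahori
section AuxIwahoriB

variable {p n : ℕ} [hp : Fact p.Prime]

lemma entry_mul (a b : GL (Fin n) ℚ_[p]) (i j : Fin n) :
    entry p n (a * b) i j = ∑ k, entry p n a i k * entry p n b k j := by
  simp [entry, Units.val_mul, Matrix.mul_apply]

lemma one_mem_J : (1 : GL (Fin n) ℚ_[p]) ∈ Jset p n := by
  refine ⟨fun i j => ?_, fun i j => ?_, fun i j hji => ?_⟩
  · simp only [entry, Units.val_one, Matrix.one_apply]
    split_ifs <;> simp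
  · simp only [inv_one, entry, Units.val_one, Matrix.one_apply]
    split_ifs <;> simp
  · simp only [entry, Units.val_one, Matrix.one_apply_ne (ne_of_gt hji)]
    simp

lemma mul_mem_J {a b : GL (Fin n) ℚ_[p]} (ha : a ∈ Jset p n) (hb : b ∈ Jset p n) :
    a * b ∈ Jset p n := by
  obtain ⟨ha1, ha2, ha3⟩ := ha
  obtain ⟨hb1, hb2, hb3⟩ := hb
  refine ⟨fun i j => ?_, fun i j => ?_, fun i j hji => ?_⟩
  · rw [entry_mul]
    refine aux_norm_sum_le _ _ zero_le_one fun k _ => ?_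
    rw [norm_mul]
    exact mul_le_one₀ (ha1 i k) (norm_nonneg _) (hb1 k j)
  · rw [_root_.mul_inv_rev, entry_mul]
    refine aux_norm_sum_le _ _ zero_le_one fun k _ => ?_
    rw [norm_mul]
    exact mul_le_one₀ (hb2 i k) (norm_nonneg _) (ha2 k j)
  · rw [entry_mul]
    refine aux_norm_sum_lt _ _ one_pos fun k _ => ?_
    rw [norm_mul]
    rcases le_or_gt k j with hkj | hjk
    · calc ‖entry p n a i k‖ * ‖entry p n b k j‖ ≤ ‖entry p n a i k‖ :=
        mul_le_of_le_one_right (norm_nonneg _) (hb1 k j)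
      _ < 1 := ha3 i k (lt_of_le_of_lt hkj hji)
    · calc ‖entry p n a i k‖ * ‖entry p n b k j‖ ≤ ‖entry p n b k j‖ :=
        mul_le_of_le_one_left (norm_nonneg _) (ha1 i k)
      _ < 1 := hb3 k j hjk

lemma aux_perm_exists_lt {τ : Equiv.Perm (Fin n)} (hτ : τ ≠ 1) : ∃ r : Fin n, r < τ r := by
  by_contra hc
  push_neg at hc
  obtain ⟨r0, hr0⟩ : ∃ r : Fin n, τ r ≠ r := by
    by_contra hall
    push_neg at hall
    exact hτ (Equiv.ext fun x => by rw [hall x]; rfl)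
  have hlt : ∑ r : Fin n, ((τ r : ℕ)) < ∑ r : Fin n, ((r : ℕ)) :=
    Finset.sum_lt_sum (fun i _ => Fin.le_def.mp (hc i))
      ⟨r0, Finset.mem_univ r0, Fin.lt_def.mp (lt_of_le_of_ne (hc r0) hr0)⟩
  have heq : ∑ r : Fin n, ((τ r : ℕ)) = ∑ r : Fin n, ((r : ℕ)) :=
    Equiv.sum_comp τ _
  omega

lemma aux_norm_det_le_one (M : Matrix (Fin n) (Fin n) ℚ_[p]) (h : ∀ i j, ‖M i j‖ ≤ 1) :
    ‖M.det‖ ≤ 1 := by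
  rw [Matrix.det_apply']
  refine aux_norm_sum_le _ _ zero_le_one fun τ _ => ?_
  rw [norm_mul]
  have h1 : ‖(((Equiv.Perm.sign τ : ℤ)) : ℚ_[p])‖ ≤ 1 := by
    rcases Int.units_eq_one_or (Equiv.Perm.sign τ) with hs | hs <;> rw [hs] <;> simp
  have h2 : ‖∏ i, M (τ i) i‖ ≤ 1 := by
    rw [norm_prod]
    exact Finset.prod_le_one (fun i _ => norm_nonneg _) (fun i _ => h _ _)
  exact mul_le_one₀ h1 (norm_nonneg _) h2

lemma J_norm_det {b : GL (Fin n) ℚ_[p]} (hb : b ∈ Jset p n) :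
    ‖((b : Matrix (Fin n) (Fin n) ℚ_[p])).det‖ = 1 := by
  have h1 : ‖((b : Matrix (Fin n) (Fin n) ℚ_[p])).det‖ ≤ 1 := aux_norm_det_le_one _ hb.1
  have h2 : ‖((↑(b⁻¹) : Matrix (Fin n) (Fin n) ℚ_[p])).det‖ ≤ 1 := aux_norm_det_le_one _ hb.2.1
  have h3 : ((b : Matrix (Fin n) (Fin n) ℚ_[p])).det *
      ((↑(b⁻¹) : Matrix (Fin n) (Fin n) ℚ_[p])).det = 1 := by
    rw [← Matrix.det_mul, ← Units.val_mul, mul_inv_cancel, Units.val_one, Matrix.det_one]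
  have h4 := congrArg norm h3
  rw [norm_mul, norm_one] at h4
  nlinarith [norm_nonneg ((b : Matrix (Fin n) (Fin n) ℚ_[p])).det,
    norm_nonneg ((↑(b⁻¹) : Matrix (Fin n) (Fin n) ℚ_[p])).det]

lemma J_diag_norm {b : GL (Fin n) ℚ_[p]} (hb : b ∈ Jset p n) (i : Fin n) :
    ‖entry p n b i i‖ = 1 := by
  classical
  set M : Matrix (Fin n) (Fin n) ℚ_[p] := (b : Matrix (Fin n) (Fin n) ℚ_[p]) with hM
  have hdet : ‖M.det‖ = 1 := J_norm_det hb
  have hrest : ‖M.det - ∏ k, M k k‖ < 1 := by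
    have hsplit : M.det - ∏ k, M k k =
        ∑ τ ∈ Finset.univ.erase (1 : Equiv.Perm (Fin n)),
          (((Equiv.Perm.sign τ : ℤ)) : ℚ_[p]) * ∏ k, M (τ k) k := by
      rw [Matrix.det_apply', ← Finset.add_sum_erase _ _ (Finset.mem_univ (1 : Equiv.Perm (Fin n)))]
      simp only [Equiv.Perm.sign_one, Units.val_one, Int.cast_one, one_mul, Equiv.Perm.one_apply]
      ring
    rw [hsplit]
    refine aux_norm_sum_lt _ _ one_pos fun τ hτ => ?_
    obtain ⟨r, hr⟩ := aux_perm_exists_lt (Finset.ne_of_mem_erase hτ)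
    rw [norm_mul]
    have h1 : ‖(((Equiv.Perm.sign τ : ℤ)) : ℚ_[p])‖ ≤ 1 := by
      rcases Int.units_eq_one_or (Equiv.Perm.sign τ) with hs | hs <;> rw [hs] <;> simp
    have h2 : ‖∏ k, M (τ k) k‖ < 1 := by
      rw [norm_prod, ← Finset.mul_prod_erase _ _ (Finset.mem_univ r)]
      have hsmall : ‖M (τ r) r‖ < 1 := hb.2.2 (τ r) r hr
      have hrestle : ∏ k ∈ Finset.univ.erase r, ‖M (τ k) k‖ ≤ 1 :=
        Finset.prod_le_one (fun k _ => norm_nonneg _) (fun k _ => hb.1 _ _)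
      calc ‖M (τ r) r‖ * ∏ k ∈ Finset.univ.erase r, ‖M (τ k) k‖ ≤ ‖M (τ r) r‖ :=
        mul_le_of_le_one_right (norm_nonneg _) hrestle
      _ < 1 := hsmall
    calc ‖(((Equiv.Perm.sign τ : ℤ)) : ℚ_[p])‖ * ‖∏ k, M (τ k) k‖ ≤ ‖∏ k, M (τ k) k‖ :=
      mul_le_of_le_one_left (norm_nonneg _) h1
    _ < 1 := h2
  have hdiagprod : ‖∏ k, M k k‖ = 1 := by
    have hle : ‖∏ k, M k k‖ ≤ 1 := by
      have heq : ∏ k, M k k = M.det - (M.det - ∏ k, M k k) := by ring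
      rw [heq]
      exact le_trans (aux_norm_sub_le_max _ _) (max_le hdet.le hrest.le)
    rcases lt_or_eq_of_le hle with hlt | heq
    · exfalso
      have h5 : M.det = (∏ k, M k k) + (M.det - ∏ k, M k k) := by ring
      have := le_trans (le_of_eq (congrArg norm h5)) (Padic.nonarchimedean _ _)
      rw [hdet] at this
      rcases max_cases ‖∏ k, M k k‖ ‖M.det - ∏ k, M k k‖ with ⟨h6, _⟩ | ⟨h6, _⟩ <;>
        rw [h6] at this <;> linarith
    · exact heq
  have hprod : ∏ k, ‖M k k‖ = 1 := by rw [← norm_prod]; exact hdiagprod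
  have hfix : ‖M i i‖ * ∏ k ∈ Finset.univ.erase i, ‖M k k‖ = 1 := by
    rw [← hprod]; exact Finset.mul_prod_erase Finset.univ (fun k => ‖M k k‖) (Finset.mem_univ i)
  have hrestle : ∏ k ∈ Finset.univ.erase i, ‖M k k‖ ≤ 1 :=
    Finset.prod_le_one (fun k _ => norm_nonneg _) (fun k _ => hb.1 _ _)
  have h7 : ‖M i i‖ ≤ 1 := hb.1 i i
  have h8 : (1 : ℝ) ≤ ‖M i i‖ := by nlinarith [norm_nonneg (M i i)]
  have h9 : entry p n b i i = M i i := rfl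
  rw [h9]
  linarith

end AuxIwahoriB
section AuxIwahoriC

variable {p n : ℕ} [hp : Fact p.Prime]

lemma perm_apply_inv_self {α : Type*} (σ : Equiv.Perm α) (x : α) : σ (σ⁻¹ x) = x :=
  σ.apply_symm_apply x

lemma elemGL_val (i j : Fin n) (h : i ≠ j) (c : ℚ_[p]) :
    (elemGL p n i j h c : Matrix (Fin n) (Fin n) ℚ_[p]) = Matrix.transvection i j c := rfl

lemma elemGL_mul (i j : Fin n) (h : i ≠ j) (c d : ℚ_[p]) :
    elemGL p n i j h c * elemGL p n i j h d = elemGL p n i j h (c + d) := by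
  apply Units.ext
  rw [Units.val_mul, elemGL_val, elemGL_val, elemGL_val]
  exact Matrix.transvection_mul_transvection_same i j h c d

lemma elemGL_zero (i j : Fin n) (h : i ≠ j) : elemGL p n i j h 0 = 1 := by
  apply Units.ext
  rw [elemGL_val, Matrix.transvection_zero, Units.val_one]

lemma elemGL_inv (i j : Fin n) (h : i ≠ j) (c : ℚ_[p]) :
    (elemGL p n i j h c)⁻¹ = elemGL p n i j h (-c) := by
  apply inv_eq_of_mul_eq_one_right
  rw [elemGL_mul, add_neg_cancel, elemGL_zero]

lemma entry_elemGL (i j : Fin n) (h : i ≠ j) (c : ℚ_[p]) (a b : Fin n) :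
    entry p n (elemGL p n i j h c) a b =
      (if a = b then 1 else 0) + (if a = i ∧ b = j then c else 0) := by
  show Matrix.transvection i j c a b = _
  rw [Matrix.transvection, Matrix.add_apply, Matrix.one_apply]
  congr 1
  by_cases h1 : a = i
  · by_cases h2 : b = j
    · subst h1; subst h2; rw [Matrix.single_apply_same, if_pos ⟨rfl, rfl⟩]
    · rw [Matrix.single_apply_of_ne i j c a b (by tauto), if_neg (by tauto)]
  · rw [Matrix.single_apply_of_ne i j c a b (by tauto), if_neg (by tauto)]

lemma elemGL_mem_J (i j : Fin n) (hij : i < j) {c : ℚ_[p]} (hc : ‖c‖ ≤ 1) :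
    elemGL p n i j (ne_of_lt hij) c ∈ Jset p n := by
  refine ⟨fun a b => ?_, fun a b => ?_, fun a b hba => ?_⟩
  · rw [entry_elemGL]
    split_ifs with h1 h2 h2
    · exact absurd (h2.2 ▸ h2.1 ▸ h1 : i = j) (ne_of_lt hij)
    · simp
    · simpa using hc
    · simp
  · rw [elemGL_inv, entry_elemGL]
    split_ifs with h1 h2 h2
    · exact absurd (h2.2 ▸ h2.1 ▸ h1 : i = j) (ne_of_lt hij)
    · simp
    · simpa using hc
    · simp
  · rw [entry_elemGL, if_neg (ne_of_gt hba), if_neg (by rintro ⟨rfl, rfl⟩; exact absurd hij (not_lt_of_gt hba))]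
    simp

lemma entry_elemGL_mul (i j : Fin n) (h : i ≠ j) (c : ℚ_[p]) (b : GL (Fin n) ℚ_[p])
    (a e : Fin n) :
    entry p n (elemGL p n i j h c * b) a e =
      if a = i then entry p n b a e + c * entry p n b j e else entry p n b a e := by
  show ((elemGL p n i j h c : Matrix (Fin n) (Fin n) ℚ_[p]) *
    (b : Matrix (Fin n) (Fin n) ℚ_[p])) a e = _
  rw [elemGL_val]
  split_ifs with ha
  · rw [ha]; exact Matrix.transvection_mul_apply_same i j e c _
  · exact Matrix.transvection_mul_apply_of_ne i j a e ha c _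

lemma permGL_val (σ : Equiv.Perm (Fin n)) (a b : Fin n) :
    (permGL p n σ : Matrix (Fin n) (Fin n) ℚ_[p]) a b = if a = σ b then 1 else 0 := by
  show ((σ.permMatrix ℚ_[p])ᵀ) a b = _
  rw [Matrix.transpose_apply, Equiv.Perm.permMatrix, PEquiv.toMatrix_apply,
    Equiv.toPEquiv_apply]
  simp [eq_comm]

lemma permGL_mul_inv (σ : Equiv.Perm (Fin n)) : permGL p n σ * permGL p n σ⁻¹ = 1 := by
  apply Units.ext
  rw [Units.val_mul, Units.val_one]
  ext a b
  rw [Matrix.mul_apply, Matrix.one_apply]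
  rw [Finset.sum_eq_single (σ⁻¹ b)]
  · rw [permGL_val σ a (σ⁻¹ b), permGL_val σ⁻¹ (σ⁻¹ b) b, perm_apply_inv_self]
    simp [Matrix.one_apply]
  · intro c _ hc
    rw [permGL_val σ⁻¹ c b, if_neg hc, mul_zero]
  · intro hcon; exact absurd (Finset.mem_univ _) hcon

lemma permGL_inv (σ : Equiv.Perm (Fin n)) : (permGL p n σ)⁻¹ = permGL p n σ⁻¹ :=
  inv_eq_of_mul_eq_one_right (permGL_mul_inv σ)

lemma entry_conj (σ : Equiv.Perm (Fin n)) (g : GL (Fin n) ℚ_[p]) (a b : Fin n) :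
    entry p n ((permGL p n σ)⁻¹ * g * permGL p n σ) a b = entry p n g (σ a) (σ b) := by
  rw [permGL_inv]
  show (((permGL p n σ⁻¹ : Matrix (Fin n) (Fin n) ℚ_[p]) * (g : Matrix (Fin n) (Fin n) ℚ_[p])) *
    (permGL p n σ : Matrix (Fin n) (Fin n) ℚ_[p])) a b = _
  rw [Matrix.mul_apply]
  rw [Finset.sum_eq_single (σ b)]
  · rw [permGL_val σ (σ b) b, if_pos rfl, mul_one, Matrix.mul_apply]
    rw [Finset.sum_eq_single (σ a)]
    · rw [permGL_val σ⁻¹ a (σ a), if_pos (by simp), one_mul]; rfl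
    · intro c _ hc
      rw [permGL_val σ⁻¹ a c,
        if_neg (fun hcon => hc (by rw [hcon, perm_apply_inv_self])), zero_mul]
    · intro hcon; exact absurd (Finset.mem_univ _) hcon
  · intro d _ hd
    rw [permGL_val σ d b, if_neg hd, mul_zero]
  · intro hcon; exact absurd (Finset.mem_univ _) hcon

end AuxIwahoriC
section AuxIwahoriD

variable {p n : ℕ} [hp : Fact p.Prime]

/-- Row-major (lexicographic) strict order on positions. -/
def plt (q r : Fin n × Fin n) : Prop := q.1 < r.1 ∨ (q.1 = r.1 ∧ q.2 < r.2)

lemma plt_irrefl (q : Fin n × Fin n) : ¬ plt q q := by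
  rintro (h | ⟨_, h⟩) <;> exact lt_irrefl _ h

lemma pairwise_product {l₁ l₂ : List (Fin n)} (h₁ : l₁.Pairwise (· < ·))
    (h₂ : l₂.Pairwise (· < ·)) : (l₁ ×ˢ l₂).Pairwise (plt (n := n)) := by
  induction l₁ with
  | nil => simp [plt]
  | cons a l₁ ih =>
    rw [List.product_cons, List.pairwise_append]
    refine ⟨?_, ih (List.Pairwise.of_cons h₁), ?_⟩
    · rw [List.pairwise_map]
      exact h₂.imp (fun hxy => Or.inr ⟨rfl, hxy⟩)
    · intro x hx y hy
      obtain ⟨bx, _, rfl⟩ := List.mem_map.mp hx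
      have hy1 : y.1 ∈ l₁ := by
        rcases y with ⟨y1, y2⟩
        exact (List.mem_product.mp hy).1
      exact Or.inl ((List.pairwise_cons.mp h₁).1 y.1 hy1)

lemma pairwise_L : ((List.finRange n) ×ˢ (List.finRange n)).Pairwise (plt (n := n)) :=
  pairwise_product (List.pairwise_lt_finRange n) (List.pairwise_lt_finRange n)

variable (p)

/-- Partial ordered product of elementary matrices. -/
noncomputable def FF (σ : Equiv.Perm (Fin n))
    (t : {ij : Fin n × Fin n // ij ∈ InvSet n σ} → Fin p)
    (l : List (Fin n × Fin n)) : GL (Fin n) ℚ_[p] :=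
  (l.map fun ij =>
    if h : ij ∈ InvSet n σ then
      elemGL p n ij.1 ij.2 (ne_of_lt (Finset.mem_filter.mp h).2.1)
        (((t ⟨ij, h⟩ : ℕ) : ℚ_[p]))
    else 1).prod

lemma uMat_eq_FF (σ : Equiv.Perm (Fin n)) (t : {ij : Fin n × Fin n // ij ∈ InvSet n σ} → Fin p) :
    uMat p n σ t = FF p σ t ((List.finRange n) ×ˢ (List.finRange n)) := rfl

lemma FF_nil (σ : Equiv.Perm (Fin n)) (t : {ij : Fin n × Fin n // ij ∈ InvSet n σ} → Fin p) :
    FF p σ t [] = 1 := rfl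

lemma FF_cons (σ : Equiv.Perm (Fin n)) (t : {ij : Fin n × Fin n // ij ∈ InvSet n σ} → Fin p)
    (q : Fin n × Fin n) (l : List (Fin n × Fin n)) :
    FF p σ t (q :: l) =
      (if h : q ∈ InvSet n σ then
        elemGL p n q.1 q.2 (ne_of_lt (Finset.mem_filter.mp h).2.1)
          (((t ⟨q, h⟩ : ℕ) : ℚ_[p]))
      else 1) * FF p σ t l := by
  rw [FF, List.map_cons, List.prod_cons]; rfl

lemma FF_mem_J (σ : Equiv.Perm (Fin n)) (t : {ij : Fin n × Fin n // ij ∈ InvSet n σ} → Fin p)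
    (l : List (Fin n × Fin n)) : FF p σ t l ∈ Jset p n := by
  induction l with
  | nil => rw [FF_nil]; exact one_mem_J
  | cons q l ih =>
    rw [FF_cons]
    refine mul_mem_J ?_ ih
    by_cases hq : q ∈ InvSet n σ
    · rw [dif_pos hq]
      exact elemGL_mem_J q.1 q.2 (Finset.mem_filter.mp hq).2.1 (aux_nat_norm_le_one _)
    · rw [dif_neg hq]; exact one_mem_J

lemma FF_congr (σ : Equiv.Perm (Fin n)) (t t' : {ij : Fin n × Fin n // ij ∈ InvSet n σ} → Fin p)
    (l : List (Fin n × Fin n))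
    (h : ∀ r (hr : r ∈ InvSet n σ), r ∈ l → t ⟨r, hr⟩ = t' ⟨r, hr⟩) :
    FF p σ t l = FF p σ t' l := by
  induction l with
  | nil => rfl
  | cons q l ih =>
    rw [FF_cons, FF_cons, ih (fun r hr hrl => h r hr (List.mem_cons_of_mem _ hrl))]
    congr 1
    by_cases hq : q ∈ InvSet n σ
    · rw [dif_pos hq, dif_pos hq, h q hq (List.mem_cons_self)]
    · rw [dif_neg hq, dif_neg hq]

variable {p}

/-- Support predicate: unipotent upper triangular, trivial rows up to `i₀`,
and on row `i₀` only entries in columns `> j₀`. -/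
def QQ (i₀ j₀ : Fin n) (M : Matrix (Fin n) (Fin n) ℚ_[p]) : Prop :=
  (∀ a b : Fin n, b < a → M a b = 0) ∧ (∀ a : Fin n, M a a = 1) ∧
  (∀ b : Fin n, b ≠ i₀ → b ≤ j₀ → M i₀ b = 0) ∧
  (∀ a b : Fin n, a < i₀ → a ≠ b → M a b = 0)

lemma QQ_one (i₀ j₀ : Fin n) : QQ i₀ j₀ (1 : Matrix (Fin n) (Fin n) ℚ_[p]) := by
  refine ⟨fun a b h => Matrix.one_apply_ne (ne_of_gt h), fun a => Matrix.one_apply_eq a,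
    fun b h1 _ => Matrix.one_apply_ne (Ne.symm h1), fun a b _ h => Matrix.one_apply_ne h⟩

lemma QQ_mul {i₀ j₀ : Fin n} {M N : Matrix (Fin n) (Fin n) ℚ_[p]}
    (hM : QQ i₀ j₀ M) (hN : QQ i₀ j₀ N) : QQ i₀ j₀ (M * N) := by
  obtain ⟨hM1, hM2, hM3, hM4⟩ := hM
  obtain ⟨hN1, hN2, hN3, hN4⟩ := hN
  refine ⟨fun a b hba => ?_, fun a => ?_, fun b hb1 hb2 => ?_, fun a b ha hab => ?_⟩
  · rw [Matrix.mul_apply]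
    apply Finset.sum_eq_zero
    intro r _
    rcases lt_or_ge r a with h | h
    · rw [hM1 a r h, zero_mul]
    · rw [hN1 r b (lt_of_lt_of_le hba h), mul_zero]
  · rw [Matrix.mul_apply]
    rw [Finset.sum_eq_single a]
    · rw [hM2, hN2, one_mul]
    · intro r _ hr
      rcases lt_or_gt_of_ne hr with h | h
      · rw [hM1 a r h, zero_mul]
      · rw [hN1 r a h, mul_zero]
    · intro hcon; exact absurd (Finset.mem_univ _) hcon
  · rw [Matrix.mul_apply]
    apply Finset.sum_eq_zero
    intro r _
    rcases lt_trichotomy r i₀ with h | h | h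
    · rw [hM1 i₀ r h, zero_mul]
    · subst h; rw [hN3 b hb1 hb2, mul_zero]
    · rcases le_or_gt r j₀ with h2 | h2
      · rw [hM3 r (ne_of_gt h) h2, zero_mul]
      · rw [hN1 r b (lt_of_le_of_lt hb2 h2), mul_zero]
  · rw [Matrix.mul_apply]
    apply Finset.sum_eq_zero
    intro r _
    by_cases hra : r = a
    · subst hra; rw [hN4 r b ha hab, mul_zero]
    · rw [hM4 a r ha (Ne.symm hra), zero_mul]

lemma QQ_listprod (i₀ j₀ : Fin n) (ms : List (Matrix (Fin n) (Fin n) ℚ_[p]))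
    (h : ∀ M ∈ ms, QQ i₀ j₀ M) : QQ i₀ j₀ ms.prod := by
  induction ms with
  | nil => exact QQ_one i₀ j₀
  | cons M ms ih =>
    rw [List.prod_cons]
    exact QQ_mul (h M (List.mem_cons_self)) (ih fun N hN => h N (List.mem_cons_of_mem _ hN))

lemma QQ_transvection {i₀ j₀ : Fin n} {i j : Fin n} (hij : i < j)
    (hplt : plt (i₀, j₀) (i, j)) (c : ℚ_[p]) :
    QQ i₀ j₀ (Matrix.transvection i j c) := by
  have hent : ∀ a b : Fin n, Matrix.transvection i j c a b =
      (if a = b then 1 else 0) + (if a = i ∧ b = j then c else 0) :=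
    fun a b => entry_elemGL i j (ne_of_lt hij) c a b
  refine ⟨fun a b hba => ?_, fun a => ?_, fun b hb1 hb2 => ?_, fun a b ha hab => ?_⟩
  · rw [hent, if_neg (ne_of_gt hba),
      if_neg (by rintro ⟨rfl, rfl⟩; exact absurd hij (not_lt_of_gt hba))]
    simp
  · rw [hent, if_pos rfl, if_neg (by rintro ⟨rfl, rfl⟩; exact absurd rfl (ne_of_lt hij))]
    simp
  · rw [hent, if_neg (Ne.symm hb1), if_neg ?_]
    · simp
    · rintro ⟨h1, rfl⟩
      rcases hplt with h | ⟨_, h2⟩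
      · simp only at h
        rw [← h1] at h
        exact lt_irrefl _ h
      · simp only at h2
        exact absurd hb2 (not_le_of_gt h2)
  · rw [hent, if_neg hab, if_neg ?_]
    · simp
    · rintro ⟨rfl, rfl⟩
      rcases hplt with h | ⟨h1, h2⟩
      · simp only at h; exact absurd h (not_lt_of_gt ha)
      · simp only at h1; exact absurd h1.symm (ne_of_lt ha)

lemma key_entry {i₀ j₀ : Fin n} (hij : i₀ < j₀) {X Y : Matrix (Fin n) (Fin n) ℚ_[p]}
    (hX : QQ i₀ j₀ X) (hY : QQ i₀ j₀ Y) (s : ℚ_[p]) :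
    (X * Matrix.transvection i₀ j₀ s * Y) i₀ j₀ = s := by
  have hXY : (X * Y) i₀ j₀ = 0 := by
    rw [Matrix.mul_apply]
    apply Finset.sum_eq_zero
    intro r _
    rcases lt_trichotomy r i₀ with h | h | h
    · rw [hX.1 i₀ r h, zero_mul]
    · subst h; rw [hY.2.2.1 j₀ (ne_of_gt hij) le_rfl, mul_zero]
    · rcases le_or_gt r j₀ with h2 | h2
      · rw [hX.2.2.1 r (ne_of_gt h) h2, zero_mul]
      · rw [hY.1 r j₀ h2, mul_zero]
  have hXEY : (X * Matrix.single i₀ j₀ s * Y) i₀ j₀ = s := by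
    have hXE : ∀ r : Fin n, (X * Matrix.single i₀ j₀ s) i₀ r =
        if r = j₀ then X i₀ i₀ * s else 0 := by
      intro r
      rw [Matrix.mul_apply]
      by_cases hr : r = j₀
      · rw [if_pos hr, hr, Finset.sum_eq_single i₀]
        · rw [Matrix.single_apply_same]
        · intro c _ hc
          rw [Matrix.single_apply_of_ne i₀ j₀ s c j₀ (by tauto), mul_zero]
        · intro hcon; exact absurd (Finset.mem_univ _) hcon
      · rw [if_neg hr]
        apply Finset.sum_eq_zero
        intro c _
        rw [Matrix.single_apply_of_ne i₀ j₀ s c r (by tauto), mul_zero]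
    rw [Matrix.mul_apply, Finset.sum_eq_single j₀]
    · rw [hXE j₀, if_pos rfl, hX.2.1, hY.2.1, one_mul, mul_one]
    · intro r _ hr
      rw [hXE r, if_neg hr, zero_mul]
    · intro hcon; exact absurd (Finset.mem_univ _) hcon
  have hsplit : X * Matrix.transvection i₀ j₀ s * Y =
      X * Y + X * Matrix.single i₀ j₀ s * Y := by
    rw [Matrix.transvection, Matrix.mul_add, Matrix.mul_one, Matrix.add_mul]
  rw [hsplit, Matrix.add_apply, hXY, hXEY, zero_add]

lemma QQ_FF (i₀ j₀ : Fin n) (σ : Equiv.Perm (Fin n))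
    (t : {ij : Fin n × Fin n // ij ∈ InvSet n σ} → Fin p) (l : List (Fin n × Fin n))
    (h : ∀ r ∈ l, plt (i₀, j₀) r) :
    QQ i₀ j₀ ((FF p σ t l : GL (Fin n) ℚ_[p]) : Matrix (Fin n) (Fin n) ℚ_[p]) := by
  induction l with
  | nil => rw [FF_nil]; exact QQ_one i₀ j₀
  | cons q l ih =>
    rw [FF_cons, Units.val_mul]
    refine QQ_mul ?_ (ih fun r hr => h r (List.mem_cons_of_mem _ hr))
    by_cases hq : q ∈ InvSet n σ
    · rw [dif_pos hq, elemGL_val]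
      exact QQ_transvection (Finset.mem_filter.mp hq).2.1
        (h q (List.mem_cons_self)) _
    · rw [dif_neg hq, Units.val_one]; exact QQ_one i₀ j₀

lemma QQ_FF_inv (i₀ j₀ : Fin n) (σ : Equiv.Perm (Fin n))
    (t : {ij : Fin n × Fin n // ij ∈ InvSet n σ} → Fin p) (l : List (Fin n × Fin n))
    (h : ∀ r ∈ l, plt (i₀, j₀) r) :
    QQ i₀ j₀ (((FF p σ t l)⁻¹ : GL (Fin n) ℚ_[p]) : Matrix (Fin n) (Fin n) ℚ_[p]) := by
  induction l with
  | nil => rw [FF_nil, inv_one, Units.val_one]; exact QQ_one i₀ j₀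
  | cons q l ih =>
    rw [FF_cons, _root_.mul_inv_rev, Units.val_mul]
    refine QQ_mul (ih fun r hr => h r (List.mem_cons_of_mem _ hr)) ?_
    by_cases hq : q ∈ InvSet n σ
    · rw [dif_pos hq, elemGL_inv, elemGL_val]
      exact QQ_transvection (Finset.mem_filter.mp hq).2.1
        (h q (List.mem_cons_self)) _
    · rw [dif_neg hq, inv_one, Units.val_one]; exact QQ_one i₀ j₀

end AuxIwahoriD
section AuxIwahoriE

variable {p n : ℕ} [hp : Fact p.Prime]

lemma EX (σ : Equiv.Perm (Fin n)) :
    ∀ (l₂ l₁ : List (Fin n × Fin n)), (l₁ ++ l₂).Pairwise (plt (n := n)) →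
    ∀ b : GL (Fin n) ℚ_[p], b ∈ Jset p n →
    (∀ r ∈ l₁, r ∈ InvSet n σ → ‖entry p n b r.1 r.2‖ < 1) →
    ∃ t : {ij : Fin n × Fin n // ij ∈ InvSet n σ} → Fin p,
      (FF p σ t l₂)⁻¹ * b ∈ Jset p n ∧
      ∀ r ∈ l₁ ++ l₂, r ∈ InvSet n σ → ‖entry p n ((FF p σ t l₂)⁻¹ * b) r.1 r.2‖ < 1 := by
  intro l₂
  induction l₂ with
  | nil =>
    intro l₁ hpw b hb hcl
    refine ⟨fun _ => ⟨0, hp.out.pos⟩, ?_, ?_⟩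
    · rw [FF_nil, inv_one, one_mul]; exact hb
    · intro r hr hrInv
      rw [FF_nil, inv_one, one_mul]
      exact hcl r (by simpa using hr) hrInv
  | cons q l₂' ih =>
    intro l₁ hpw b hb hcl
    have hpw' : ((l₁ ++ [q]) ++ l₂').Pairwise (plt (n := n)) := by
      rw [List.append_assoc, List.singleton_append]; exact hpw
    by_cases hq : q ∈ InvSet n σ
    · have hlt : q.1 < q.2 := (Finset.mem_filter.mp hq).2.1
      obtain ⟨s, hs⟩ := aux_exists_rep_mul (hb.1 q.1 q.2) (J_diag_norm hb q.2)
      have hb'J : (elemGL p n q.1 q.2 (ne_of_lt hlt) (((s : ℕ) : ℚ_[p])))⁻¹ * b ∈ Jset p n := by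
        rw [elemGL_inv]
        exact mul_mem_J (elemGL_mem_J q.1 q.2 hlt
          (by rw [norm_neg]; exact aux_nat_norm_le_one _)) hb
      set b' := (elemGL p n q.1 q.2 (ne_of_lt hlt) (((s : ℕ) : ℚ_[p])))⁻¹ * b with hb'def
      have hent : ∀ a e : Fin n, entry p n b' a e =
          if a = q.1 then entry p n b a e - ((s : ℕ) : ℚ_[p]) * entry p n b q.2 e
          else entry p n b a e := by
        intro a e
        rw [hb'def, elemGL_inv, entry_elemGL_mul]
        split_ifs with ha
        · ring
        · rfl
      have hcl' : ∀ r ∈ l₁ ++ [q], r ∈ InvSet n σ → ‖entry p n b' r.1 r.2‖ < 1 := by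
        intro r hr hrInv
        rcases List.mem_append.mp hr with hr1 | hr2
        · rw [hent]
          split_ifs with hre
          · have hplt : plt r q :=
              (List.pairwise_append.mp hpw).2.2 r hr1 q (List.mem_cons_self)
            have hr2lt : r.2 < q.2 := by
              rcases hplt with h | ⟨_, h⟩
              · rw [hre] at h; exact absurd h (lt_irrefl _)
              · exact h
            have hA : ‖entry p n b r.1 r.2‖ < 1 := hcl r hr1 hrInv
            have hB : ‖((s : ℕ) : ℚ_[p]) * entry p n b q.2 r.2‖ < 1 := by
              rw [norm_mul]
              calc ‖((s : ℕ) : ℚ_[p])‖ * ‖entry p n b q.2 r.2‖ ≤ ‖entry p n b q.2 r.2‖ :=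
                mul_le_of_le_one_left (norm_nonneg _) (aux_nat_norm_le_one _)
              _ < 1 := hb.2.2 q.2 r.2 hr2lt
            exact lt_of_le_of_lt (aux_norm_sub_le_max _ _) (max_lt hA hB)
          · exact hcl r hr1 hrInv
        · have hrq : r = q := by simpa using hr2
          subst hrq
          rw [hent, if_pos rfl]
          exact hs
      obtain ⟨t₀, ht₀J, ht₀⟩ := ih (l₁ ++ [q]) hpw' b' hb'J hcl'
      have hqnot : q ∉ l₂' := by
        intro hmem
        exact plt_irrefl q ((List.pairwise_cons.mp (List.pairwise_append.mp hpw).2.1).1 q hmem)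
      have hFF : FF p σ (Function.update t₀ ⟨q, hq⟩ s) (q :: l₂') =
          elemGL p n q.1 q.2 (ne_of_lt hlt) (((s : ℕ) : ℚ_[p])) * FF p σ t₀ l₂' := by
        rw [FF_cons, dif_pos hq]
        have h1 : Function.update t₀ ⟨q, hq⟩ s ⟨q, hq⟩ = s := Function.update_self _ _ _
        rw [h1]
        congr 1
        apply FF_congr
        intro r hr hrl
        exact Function.update_of_ne
          (show (⟨r, hr⟩ : {ij : Fin n × Fin n // ij ∈ InvSet n σ}) ≠ ⟨q, hq⟩ from
            fun hEq => hqnot (Subtype.mk.inj hEq ▸ hrl)) s t₀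
      refine ⟨Function.update t₀ ⟨q, hq⟩ s, ?_, ?_⟩
      · rw [hFF, _root_.mul_inv_rev, mul_assoc, ← hb'def]
        exact ht₀J
      · intro r hr hrInv
        rw [hFF, _root_.mul_inv_rev, mul_assoc, ← hb'def]
        exact ht₀ r (by rw [List.append_assoc, List.singleton_append]; exact hr) hrInv
    · have hcl' : ∀ r ∈ l₁ ++ [q], r ∈ InvSet n σ → ‖entry p n b r.1 r.2‖ < 1 := by
        intro r hr hrInv
        rcases List.mem_append.mp hr with hr1 | hr2
        · exact hcl r hr1 hrInv
        · exfalso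
          have hrq : r = q := by simpa using hr2
          exact hq (hrq ▸ hrInv)
      obtain ⟨t₀, ht₀J, ht₀⟩ := ih (l₁ ++ [q]) hpw' b hb hcl'
      refine ⟨t₀, ?_, ?_⟩
      · rw [FF_cons, dif_neg hq, one_mul]; exact ht₀J
      · intro r hr hrInv
        rw [FF_cons, dif_neg hq, one_mul]
        exact ht₀ r (by rw [List.append_assoc, List.singleton_append]; exact hr) hrInv

lemma exists_decomp (σ : Equiv.Perm (Fin n)) (a : GL (Fin n) ℚ_[p]) (ha : a ∈ Jset p n) :
    ∃ t : {ij : Fin n × Fin n // ij ∈ InvSet n σ} → Fin p, ∃ c : GL (Fin n) ℚ_[p],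
      c ∈ Jset p n ∧ (∀ r ∈ InvSet n σ, ‖entry p n c r.1 r.2‖ < 1) ∧
      a = uMat p n σ t * c := by
  obtain ⟨t, htJ, ht⟩ := EX σ ((List.finRange n) ×ˢ (List.finRange n)) [] pairwise_L a ha
    (by simp)
  refine ⟨t, (FF p σ t ((List.finRange n) ×ˢ (List.finRange n)))⁻¹ * a, htJ, ?_, ?_⟩
  · intro r hr
    refine ht r ?_ hr
    rcases r with ⟨r1, r2⟩
    exact List.mem_product.mpr ⟨List.mem_finRange _, List.mem_finRange _⟩
  · rw [uMat_eq_FF, ← mul_assoc, mul_inv_cancel, one_mul]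

lemma conj_mem_J {σ : Equiv.Perm (Fin n)} {c : GL (Fin n) ℚ_[p]} (hc : c ∈ Jset p n)
    (hinv : ∀ r ∈ InvSet n σ, ‖entry p n c r.1 r.2‖ < 1) :
    (permGL p n σ)⁻¹ * c * permGL p n σ ∈ Jset p n := by
  have hconjinv : ((permGL p n σ)⁻¹ * c * permGL p n σ)⁻¹ =
      (permGL p n σ)⁻¹ * c⁻¹ * permGL p n σ := by
    group
  refine ⟨fun i j => ?_, fun i j => ?_, fun i j hji => ?_⟩
  · rw [entry_conj]; exact hc.1 _ _
  · rw [hconjinv, entry_conj]; exact hc.2.1 _ _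
  · rw [entry_conj]
    rcases lt_trichotomy (σ i) (σ j) with h | h | h
    · exact hinv (σ i, σ j)
        (Finset.mem_filter.mpr ⟨Finset.mem_univ _, h, by simpa using hji⟩)
    · exact absurd (σ.injective h) (ne_of_gt hji)
    · exact hc.2.2 (σ i) (σ j) h

lemma INJ (σ : Equiv.Perm (Fin n)) :
    ∀ (l : List (Fin n × Fin n)), l.Pairwise (plt (n := n)) →
    ∀ t t' : {ij : Fin n × Fin n // ij ∈ InvSet n σ} → Fin p,
    (∀ r ∈ InvSet n σ, ‖entry p n ((FF p σ t' l)⁻¹ * FF p σ t l) r.1 r.2‖ < 1) →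
    ∀ r (hr : r ∈ InvSet n σ), r ∈ l → t ⟨r, hr⟩ = t' ⟨r, hr⟩ := by
  intro l
  induction l with
  | nil => intro _ t t' _ r hr hrl; exact absurd hrl (List.not_mem_nil)
  | cons q l ih =>
    intro hpw t t' hnorm r hr hrl
    have hpl : ∀ r' ∈ l, plt q r' := (List.pairwise_cons.mp hpw).1
    by_cases hq : q ∈ InvSet n σ
    · have hlt : q.1 < q.2 := (Finset.mem_filter.mp hq).2.1
      have hval : t ⟨q, hq⟩ = t' ⟨q, hq⟩ := by
        by_contra hne
        set s : ℚ_[p] := ((t ⟨q, hq⟩ : ℕ) : ℚ_[p]) - ((t' ⟨q, hq⟩ : ℕ) : ℚ_[p]) with hsdef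
        have hcomb : elemGL p n q.1 q.2 (ne_of_lt hlt) (-((t' ⟨q, hq⟩ : ℕ) : ℚ_[p])) *
            elemGL p n q.1 q.2 (ne_of_lt hlt) (((t ⟨q, hq⟩ : ℕ) : ℚ_[p])) =
            elemGL p n q.1 q.2 (ne_of_lt hlt) s := by
          rw [elemGL_mul]
          congr 1
          rw [hsdef]; ring
        have hexp : (FF p σ t' (q :: l))⁻¹ * FF p σ t (q :: l) =
            (FF p σ t' l)⁻¹ * elemGL p n q.1 q.2 (ne_of_lt hlt) s * FF p σ t l := by
          rw [FF_cons, FF_cons, dif_pos hq, dif_pos hq, _root_.mul_inv_rev, elemGL_inv,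
            ← hcomb]
          group
        have hkey : entry p n ((FF p σ t' (q :: l))⁻¹ * FF p σ t (q :: l)) q.1 q.2 = s := by
          rw [hexp]
          have hvals : (((FF p σ t' l)⁻¹ * elemGL p n q.1 q.2 (ne_of_lt hlt) s *
              FF p σ t l : GL (Fin n) ℚ_[p]) : Matrix (Fin n) (Fin n) ℚ_[p]) =
              (((FF p σ t' l)⁻¹ : GL (Fin n) ℚ_[p]) : Matrix (Fin n) (Fin n) ℚ_[p]) *
                Matrix.transvection q.1 q.2 s *
                ((FF p σ t l : GL (Fin n) ℚ_[p]) : Matrix (Fin n) (Fin n) ℚ_[p]) := by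
            rw [Units.val_mul, Units.val_mul, elemGL_val]
          show (((FF p σ t' l)⁻¹ * elemGL p n q.1 q.2 (ne_of_lt hlt) s *
              FF p σ t l : GL (Fin n) ℚ_[p]) : Matrix (Fin n) (Fin n) ℚ_[p]) q.1 q.2 = s
          rw [hvals]
          exact key_entry hlt (QQ_FF_inv q.1 q.2 σ t' l hpl) (QQ_FF q.1 q.2 σ t l hpl) s
        have hsmall := hnorm q hq
        rw [hkey, hsdef] at hsmall
        have hcast : ((t ⟨q, hq⟩ : ℕ) : ℚ_[p]) - ((t' ⟨q, hq⟩ : ℕ) : ℚ_[p]) =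
            (((((t ⟨q, hq⟩ : ℕ) : ℤ) - ((t' ⟨q, hq⟩ : ℕ) : ℤ)) : ℤ) : ℚ_[p]) := by
          push_cast; ring
        rw [hcast, Padic.norm_intCast_lt_one_iff] at hsmall
        have h1 : (t ⟨q, hq⟩ : ℕ) < p := (t ⟨q, hq⟩).2
        have h2 : (t' ⟨q, hq⟩ : ℕ) < p := (t' ⟨q, hq⟩).2
        have hzero : (((t ⟨q, hq⟩ : ℕ) : ℤ) - ((t' ⟨q, hq⟩ : ℕ) : ℤ)) = 0 :=
          Int.eq_zero_of_abs_lt_dvd hsmall (abs_lt.mpr ⟨by omega, by omega⟩)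
        exact hne (Fin.ext (by omega))
      by_cases hrq : r = q
      · subst hrq; exact hval
      · have hFFeq : (FF p σ t' (q :: l))⁻¹ * FF p σ t (q :: l) =
            (FF p σ t' l)⁻¹ * FF p σ t l := by
          rw [FF_cons, FF_cons, dif_pos hq, dif_pos hq, hval, _root_.mul_inv_rev]
          group
        exact ih hpw.of_cons t t' (fun r' hr' => hFFeq ▸ hnorm r' hr') r hr
          (List.mem_of_ne_of_mem hrq hrl)
    · have hFFeq : (FF p σ t' (q :: l))⁻¹ * FF p σ t (q :: l) =
          (FF p σ t' l)⁻¹ * FF p σ t l := by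
        rw [FF_cons, FF_cons, dif_neg hq, dif_neg hq, one_mul, one_mul]
      have hrq : r ≠ q := fun h => hq (h ▸ hr)
      exact ih hpw.of_cons t t' (fun r' hr' => hFFeq ▸ hnorm r' hr') r hr
        (List.mem_of_ne_of_mem hrq hrl)

end AuxIwahoriE
/-- The double coset `J·w_σ·J` is the union of the left cosets `u(t)·w_σ·J` over
`t : Inv(σ) → {0,…,p-1}`, and these `p^{ℓ(σ)}` left cosets are pairwise distinct. -/
theorem double_coset_perm_decomposition (hn : 2 ≤ n) (σ : Equiv.Perm (Fin n)) (k : ℕ)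
    (hk : len n σ = k) :
    (dcos p n (permGL p n σ) =
      ⋃ t : {ij : Fin n × Fin n // ij ∈ InvSet n σ} → Fin p,
        {x | ∃ j ∈ Jset p n, x = uMat p n σ t * permGL p n σ * j}) ∧
    Function.Injective (fun t : {ij : Fin n × Fin n // ij ∈ InvSet n σ} → Fin p =>
      {x | ∃ j ∈ Jset p n, x = uMat p n σ t * permGL p n σ * j}) ∧
    Fintype.card ({ij : Fin n × Fin n // ij ∈ InvSet n σ} → Fin p) = p ^ k := by
  refine ⟨?_, ?_, ?_⟩
  · ext x
    constructor
    · rintro ⟨a, haJ, b, hbJ, rfl⟩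
      obtain ⟨t, c, hcJ, hcInv, hac⟩ := exists_decomp σ a haJ
      refine Set.mem_iUnion.mpr ⟨t, ⟨(permGL p n σ)⁻¹ * c * permGL p n σ * b,
        mul_mem_J (conj_mem_J hcJ hcInv) hbJ, ?_⟩⟩
      rw [hac]
      group
    · intro hx
      obtain ⟨t, hxt⟩ := Set.mem_iUnion.mp hx
      obtain ⟨j, hjJ, rfl⟩ := hxt
      exact ⟨uMat p n σ t, by rw [uMat_eq_FF]; exact FF_mem_J p σ t _, j, hjJ, rfl⟩
  · intro t t' hset
    have h1 : uMat p n σ t * permGL p n σ ∈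
        {x | ∃ j ∈ Jset p n, x = uMat p n σ t * permGL p n σ * j} :=
      ⟨1, one_mem_J, by rw [mul_one]⟩
    simp only at hset
    rw [hset] at h1
    obtain ⟨j, hjJ, hj⟩ := h1
    have hjval : j = (permGL p n σ)⁻¹ * ((uMat p n σ t')⁻¹ * uMat p n σ t) * permGL p n σ := by
      have h2 : (uMat p n σ t' * permGL p n σ)⁻¹ * (uMat p n σ t * permGL p n σ) = j := by
        rw [hj]; group
      rw [← h2]; group
    have hnorm : ∀ r ∈ InvSet n σ,
        ‖entry p n ((FF p σ t' ((List.finRange n) ×ˢ (List.finRange n)))⁻¹ *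
          FF p σ t ((List.finRange n) ×ˢ (List.finRange n))) r.1 r.2‖ < 1 := by
      intro r hr
      obtain ⟨_, hlt, hinv⟩ := Finset.mem_filter.mp hr
      have hj3 := hjJ.2.2 (σ⁻¹ r.1) (σ⁻¹ r.2) hinv
      rw [hjval, entry_conj] at hj3
      rw [perm_apply_inv_self, perm_apply_inv_self] at hj3
      rw [← uMat_eq_FF, ← uMat_eq_FF]
      exact hj3
    funext r
    rcases r with ⟨r, hr⟩
    refine INJ σ _ pairwise_L t t' hnorm r hr ?_
    rcases r with ⟨r1, r2⟩
    exact List.mem_product.mpr ⟨List.mem_finRange _, List.mem_finRange _⟩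
  · rw [← hk, len, Fintype.card_fun, Fintype.card_fin, Fintype.card_coe]
end

section
/- (Bruhat–Iwahori decomposition) Every g ∈ GL_n(ℚ_p) can be written as g = u·d·w_σ·j, where u ∈ N is upper unitriangular, d ∈ T is diagonal, σ ∈ S_n, and j ∈ J. In other words, G = ⋃_{d ∈ T} ⋃_{σ ∈ S_n} N·d·w_σ·J. -/
open Matrix MeasureTheory Pointwise

variable (p n : ℕ) [Fact p.Prime]

section BIAux
variable {p n}
open IsUltrametricDist
/-- integral with below-diagonal entries in pZp -/
def Iwa (M : Matrix (Fin n) (Fin n) ℚ_[p]) : Prop :=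
  (∀ i j, ‖M i j‖ ≤ 1) ∧ ∀ i j : Fin n, j < i → ‖M i j‖ < 1

lemma Iwa.one : Iwa (1 : Matrix (Fin n) (Fin n) ℚ_[p]) := by
  constructor
  · intro i j
    by_cases h : i = j <;> simp [Matrix.one_apply, h]
  · intro i j h
    simp [Matrix.one_apply, (h.ne).symm, h.ne']

lemma Iwa.mul {A B : Matrix (Fin n) (Fin n) ℚ_[p]} (hA : Iwa A) (hB : Iwa B) :
    Iwa (A * B) := by
  constructor
  · intro i j
    rw [Matrix.mul_apply]
    refine norm_sum_le_of_forall_le_of_nonneg zero_le_one fun k _ => ?_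
    rw [norm_mul]
    exact mul_le_one₀ (hA.1 i k) (norm_nonneg _) (hB.1 k j)
  · intro i j hji
    rw [Matrix.mul_apply]
    have hne : (Finset.univ : Finset (Fin n)).Nonempty := ⟨i, Finset.mem_univ i⟩
    refine lt_of_le_of_lt (hne.norm_sum_le_sup'_norm _) ?_
    rw [Finset.sup'_lt_iff]
    intro k _
    rw [norm_mul]
    rcases lt_or_ge k i with hk | hk
    · calc ‖A i k‖ * ‖B k j‖ ≤ ‖A i k‖ * 1 := by
            exact mul_le_mul_of_nonneg_left (hB.1 k j) (norm_nonneg _)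
        _ = ‖A i k‖ := mul_one _
        _ < 1 := hA.2 i k hk
    · have hkj : j < k := lt_of_lt_of_le hji hk
      calc ‖A i k‖ * ‖B k j‖ ≤ 1 * ‖B k j‖ :=
            mul_le_mul_of_nonneg_right (hA.1 i k) (norm_nonneg _)
        _ = ‖B k j‖ := one_mul _
        _ < 1 := hB.2 k j hkj

def Uni (M : Matrix (Fin n) (Fin n) ℚ_[p]) : Prop :=
  (∀ i, M i i = 1) ∧ ∀ i j : Fin n, j < i → M i j = 0

lemma Uni.mul {A B : Matrix (Fin n) (Fin n) ℚ_[p]} (hA : Uni A) (hB : Uni B) :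
    Uni (A * B) := by
  constructor
  · intro i
    rw [Matrix.mul_apply]
    rw [Finset.sum_eq_single i]
    · rw [hA.1, hB.1, one_mul]
    · intro k _ hk
      rcases lt_or_gt_of_ne hk with h | h
      · rw [hA.2 i k h, zero_mul]
      · rw [hB.2 k i h, mul_zero]
    · simp
  · intro i j hji
    rw [Matrix.mul_apply]
    refine Finset.sum_eq_zero fun k _ => ?_
    rcases lt_or_ge k i with h | h
    · rw [hA.2 i k h, zero_mul]
    · rw [hB.2 k j (lt_of_lt_of_le hji h), mul_zero]

/-- unit `1 + E` when `E * E = 0`. -/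
noncomputable def elemUnit (E : Matrix (Fin n) (Fin n) ℚ_[p]) (hE : E * E = 0) :
    GL (Fin n) ℚ_[p] where
  val := 1 + E
  inv := 1 - E
  val_inv := by
    have : (1 + E) * (1 - E) = 1 + E - (E + E * E) := by noncomm_ring
    rw [this, hE, add_zero, add_sub_cancel_right]
  inv_val := by
    have : (1 - E) * (1 + E) = 1 + E - (E + E * E) := by noncomm_ring
    rw [this, hE, add_zero, add_sub_cancel_right]

lemma exists_pivot (f : Fin n → ℚ_[p]) (hf : ∃ j, f j ≠ 0) :
    ∃ c, f c ≠ 0 ∧ (∀ j, ‖f j‖ ≤ ‖f c‖) ∧ ∀ j, j < c → ‖f j‖ < ‖f c‖ := by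
  classical
  obtain ⟨j₀, hj₀⟩ := hf
  set S : Finset (Fin n) :=
    Finset.univ.filter (fun j => ∀ j', ‖f j'‖ ≤ ‖f j‖) with hS
  have hSne : S.Nonempty := by
    obtain ⟨b, _, hb⟩ := Finset.exists_max_image Finset.univ (fun j => ‖f j‖)
      ⟨j₀, Finset.mem_univ _⟩
    exact ⟨b, by simp [hS]; intro j'; exact hb j' (Finset.mem_univ _)⟩
  set c := S.min' hSne with hc
  have hcS : c ∈ S := S.min'_mem hSne
  have hmax : ∀ j', ‖f j'‖ ≤ ‖f c‖ := by
    have := Finset.mem_filter.1 hcS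
    exact this.2
  refine ⟨c, ?_, hmax, ?_⟩
  · intro h
    have := hmax j₀
    rw [h] at this
    simp only [norm_zero] at this
    exact hj₀ (norm_le_zero_iff.1 this)
  · intro j hj
    have hjS : j ∉ S := by
      intro hjS
      exact absurd (S.min'_le j hjS) (not_le.2 hj)
    rw [hS, Finset.mem_filter] at hjS
    push_neg at hjS
    obtain ⟨j', hj'⟩ := hjS (Finset.mem_univ _)
    exact lt_of_lt_of_le hj' (hmax j')

lemma row_ne_zero (M : GL (Fin n) ℚ_[p]) (i : Fin n) :
    ∃ j, (M : Matrix (Fin n) (Fin n) ℚ_[p]) i j ≠ 0 := by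
  by_contra h
  push_neg at h
  have h1 : ((M : Matrix (Fin n) (Fin n) ℚ_[p]) * (M⁻¹ : GL (Fin n) ℚ_[p])) i i = 1 := by
    have : (M : Matrix (Fin n) (Fin n) ℚ_[p]) * (M⁻¹ : GL (Fin n) ℚ_[p]) = 1 := by
      rw [← Matrix.GeneralLinearGroup.coe_mul, mul_inv_cancel, Matrix.GeneralLinearGroup.coe_one]
    rw [this, Matrix.one_apply_eq]
  rw [Matrix.mul_apply] at h1
  simp only [h, zero_mul, Finset.sum_const_zero] at h1
  exact zero_ne_one h1

def Settled (k : ℕ) (M : Matrix (Fin n) (Fin n) ℚ_[p]) : Prop :=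
  ∀ i : Fin n, k ≤ (i : ℕ) →
    ∃ c : Fin n, M i c ≠ 0 ∧ (∀ j, j ≠ c → M i j = 0) ∧ (∀ i', i' ≠ i → M i' c = 0)

lemma pivot_step (k : ℕ) (hk : k < n) (M : GL (Fin n) ℚ_[p])
    (hM : Settled (k + 1) (M : Matrix (Fin n) (Fin n) ℚ_[p])) :
    ∃ U Jm : GL (Fin n) ℚ_[p],
      Uni (U : Matrix (Fin n) (Fin n) ℚ_[p]) ∧
      Uni ((U⁻¹ : GL (Fin n) ℚ_[p]) : Matrix (Fin n) (Fin n) ℚ_[p]) ∧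
      Iwa (Jm : Matrix (Fin n) (Fin n) ℚ_[p]) ∧
      Iwa ((Jm⁻¹ : GL (Fin n) ℚ_[p]) : Matrix (Fin n) (Fin n) ℚ_[p]) ∧
      Settled k ((U * M * Jm : GL (Fin n) ℚ_[p]) : Matrix (Fin n) (Fin n) ℚ_[p]) := by
  classical
  set A : Matrix (Fin n) (Fin n) ℚ_[p] := (M : Matrix (Fin n) (Fin n) ℚ_[p]) with hA
  set K : Fin n := ⟨k, hk⟩ with hKdef
  obtain ⟨c, hc0, hmax, hstrict⟩ := exists_pivot (fun j => A K j) (row_ne_zero M K)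
  set r : Fin n → ℚ_[p] := fun j => if j = c then 0 else -(A K j / A K c) with hr
  have hrc : r c = 0 := by simp [hr]
  set E : Matrix (Fin n) (Fin n) ℚ_[p] :=
    Matrix.of (fun i j => if i = c then r j else 0) with hE
  have hEapp : ∀ i j, E i j = if i = c then r j else 0 := fun i j => rfl
  have hEE : E * E = 0 := by
    ext i j
    rw [Matrix.mul_apply]
    rw [Finset.sum_eq_single c]
    · simp [hEapp, hrc]
    · intro m _ hm
      simp [hEapp, hm]
    · simp
  set Jm := elemUnit E hEE with hJm
  set M₁ : Matrix (Fin n) (Fin n) ℚ_[p] := A * (1 + E) with hM₁def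
  have hM₁ : ∀ i j, M₁ i j = A i j + A i c * r j := by
    intro i j
    rw [hM₁def, Matrix.mul_add, Matrix.mul_one, Matrix.add_apply]
    congr 1
    rw [Matrix.mul_apply]
    rw [Finset.sum_eq_single c]
    · simp [hEapp]
    · intro m _ hm; simp [hEapp, hm]
    · simp
  set v : Fin n → ℚ_[p] := fun i => if (i : ℕ) < k then -(M₁ i c / M₁ K c) else 0 with hv
  have hvK : v K = 0 := by rw [hv]; exact if_neg (lt_irrefl k)
  have hvge : ∀ i : Fin n, k ≤ (i : ℕ) → v i = 0 := by
    intro i hi; simp [hv, Nat.not_lt.2 hi]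
  set V : Matrix (Fin n) (Fin n) ℚ_[p] :=
    Matrix.of (fun i j => if j = K then v i else 0) with hV
  have hVapp : ∀ i j, V i j = if j = K then v i else 0 := fun i j => rfl
  have hVV : V * V = 0 := by
    ext i j
    rw [Matrix.mul_apply]
    rw [Finset.sum_eq_single K]
    · simp [hVapp, hvK]
    · intro m _ hm; simp [hVapp, hm]
    · simp
  set U := elemUnit V hVV with hU
  set B : Matrix (Fin n) (Fin n) ℚ_[p] := (1 + V) * M₁ with hBdef
  have hB : ∀ i j, B i j = M₁ i j + v i * M₁ K j := by
    intro i j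
    rw [hBdef, Matrix.add_mul, Matrix.one_mul, Matrix.add_apply]
    congr 1
    rw [Matrix.mul_apply]
    rw [Finset.sum_eq_single K]
    · simp [hVapp]
    · intro m _ hm; simp [hVapp, hm]
    · simp
  -- key row/column facts
  have hrow : ∀ j, j ≠ c → M₁ K j = 0 := by
    intro j hj
    rw [hM₁ K j, hr]
    simp only [hj, if_neg]
    rw [if_neg not_false, mul_neg, mul_div_cancel₀ _ hc0, add_neg_cancel]
  have hKc : M₁ K c = A K c := by rw [hM₁, hrc, mul_zero, add_zero]
  have hcol : ∀ i', M₁ i' c = A i' c := by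
    intro i'; rw [hM₁, hrc, mul_zero, add_zero]
  refine ⟨U, Jm, ?_, ?_, ?_, ?_, ?_⟩
  · -- Uni (1 + V)
    have hUval : (U : Matrix (Fin n) (Fin n) ℚ_[p]) = 1 + V := rfl
    rw [hUval]
    constructor
    · intro i
      rw [Matrix.add_apply, Matrix.one_apply_eq, hVapp]
      by_cases h : i = K
      · subst h; rw [if_pos rfl, hvK, add_zero]
      · rw [if_neg h, add_zero]
    · intro i j hji
      rw [Matrix.add_apply, Matrix.one_apply_ne (ne_of_gt hji), hVapp]
      by_cases h : j = K
      · subst h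
        rw [if_pos rfl, hvge i (le_of_lt hji), zero_add]
      · rw [if_neg h, add_zero]
  · -- Uni (1 - V)
    have : ((U⁻¹ : GL (Fin n) ℚ_[p]) : Matrix (Fin n) (Fin n) ℚ_[p]) = 1 - V := rfl
    rw [this]
    constructor
    · intro i
      rw [Matrix.sub_apply, Matrix.one_apply_eq, hVapp]
      by_cases h : i = K
      · subst h; rw [if_pos rfl, hvK, sub_zero]
      · rw [if_neg h, sub_zero]
    · intro i j hji
      rw [Matrix.sub_apply, Matrix.one_apply_ne (ne_of_gt hji), hVapp]
      by_cases h : j = K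
      · subst h
        rw [if_pos rfl, hvge i (le_of_lt hji), sub_zero]
      · rw [if_neg h, sub_zero]
  · -- Iwa (1 + E)
    have hJval : (Jm : Matrix (Fin n) (Fin n) ℚ_[p]) = 1 + E := rfl
    rw [hJval]
    have hrle : ∀ j, ‖r j‖ ≤ 1 := by
      intro j
      by_cases h : j = c
      · simp [hr, h]
      · rw [show r j = -(A K j / A K c) by simp [hr, h], norm_neg, norm_div]
        exact div_le_one_of_le₀ (hmax j) (norm_nonneg _)
    have hrlt : ∀ j, j < c → ‖r j‖ < 1 := by
      intro j hj
      rw [show r j = -(A K j / A K c) by simp [hr, ne_of_lt hj], norm_neg, norm_div]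
      rw [div_lt_one (by simpa only [norm_pos_iff] using hc0)]
      exact hstrict j hj
    constructor
    · intro i j
      rw [Matrix.add_apply, hEapp]
      by_cases h : i = c
      · rw [if_pos h]
        subst h
        by_cases h2 : i = j
        · subst h2; rw [Matrix.one_apply_eq, hrc, add_zero]; simp
        · rw [Matrix.one_apply_ne h2, zero_add]
          exact hrle j
      · rw [if_neg h, add_zero]
        by_cases h2 : i = j
        · subst h2; rw [Matrix.one_apply_eq]; simp
        · rw [Matrix.one_apply_ne h2]; simp
    · intro i j hji
      rw [Matrix.add_apply, hEapp, Matrix.one_apply_ne (ne_of_gt hji)]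
      by_cases h : i = c
      · rw [if_pos h, zero_add]
        subst h
        exact hrlt j hji
      · rw [if_neg h, add_zero]; simp
  · -- Iwa (1 - E)
    have hJval : ((Jm⁻¹ : GL (Fin n) ℚ_[p]) : Matrix (Fin n) (Fin n) ℚ_[p]) = 1 - E := rfl
    rw [hJval]
    have hrle : ∀ j, ‖r j‖ ≤ 1 := by
      intro j
      by_cases h : j = c
      · simp [hr, h]
      · rw [show r j = -(A K j / A K c) by simp [hr, h], norm_neg, norm_div]
        exact div_le_one_of_le₀ (hmax j) (norm_nonneg _)
    have hrlt : ∀ j, j < c → ‖r j‖ < 1 := by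
      intro j hj
      rw [show r j = -(A K j / A K c) by simp [hr, ne_of_lt hj], norm_neg, norm_div]
      rw [div_lt_one (by simpa only [norm_pos_iff] using hc0)]
      exact hstrict j hj
    constructor
    · intro i j
      rw [Matrix.sub_apply, hEapp]
      by_cases h : i = c
      · rw [if_pos h]
        subst h
        by_cases h2 : i = j
        · subst h2; rw [Matrix.one_apply_eq, hrc, sub_zero]; simp
        · rw [Matrix.one_apply_ne h2, zero_sub, norm_neg]
          exact hrle j
      · rw [if_neg h, sub_zero]
        by_cases h2 : i = j
        · subst h2; rw [Matrix.one_apply_eq]; simp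
        · rw [Matrix.one_apply_ne h2]; simp
    · intro i j hji
      rw [Matrix.sub_apply, hEapp, Matrix.one_apply_ne (ne_of_gt hji)]
      by_cases h : i = c
      · rw [if_pos h, zero_sub, norm_neg]
        subst h
        exact hrlt j hji
      · rw [if_neg h, sub_zero]; simp
  · -- Settled k B
    have hBval : ((U * M * Jm : GL (Fin n) ℚ_[p]) : Matrix (Fin n) (Fin n) ℚ_[p]) = B := by
      rw [hBdef, hM₁def]
      show ((U : Matrix (Fin n) (Fin n) ℚ_[p]) * A * (Jm : Matrix (Fin n) (Fin n) ℚ_[p]))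
        = (1 + V) * (A * (1 + E))
      rw [show (U : Matrix (Fin n) (Fin n) ℚ_[p]) = 1 + V from rfl,
        show (Jm : Matrix (Fin n) (Fin n) ℚ_[p]) = 1 + E from rfl, Matrix.mul_assoc]
    rw [hBval]
    intro i hi
    by_cases hik : (i : ℕ) = k
    · have hiK : i = K := Fin.ext hik
      subst hiK
      refine ⟨c, ?_, ?_, ?_⟩
      · rw [hB, hvK, zero_mul, add_zero, hKc]
        exact hc0
      · intro j hj
        rw [hB, hvK, zero_mul, add_zero]
        exact hrow j hj
      · intro i' hi'
        rw [hB, hcol, hKc]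
        by_cases hlt : (i' : ℕ) < k
        · rw [show v i' = -(M₁ i' c / M₁ K c) by simp [hv, hlt], hcol, hKc]
          field_simp
          ring
        · have hvi' : v i' = 0 := hvge i' (Nat.not_lt.1 hlt)
          rw [hvi', zero_mul, add_zero]
          have hge : k + 1 ≤ (i' : ℕ) := by
            rcases Nat.lt_or_ge (i' : ℕ) (k + 1) with h | h
            · exfalso
              have : (i' : ℕ) = k := Nat.le_antisymm (Nat.lt_succ_iff.1 h) (Nat.not_lt.1 hlt)
              exact hi' (Fin.ext this)
            · exact h
          obtain ⟨c', h1, h2, h3⟩ := hM i' hge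
          have hcc' : c ≠ c' := by
            intro hcc
            apply hc0
            rw [hcc]
            exact h3 K (fun hKi => hi' hKi.symm)
          rw [h2 c hcc']
    · have hge : k + 1 ≤ (i : ℕ) := Nat.lt_of_le_of_ne hi (fun h => hik h.symm)
      obtain ⟨c', h1, h2, h3⟩ := hM i hge
      have hKi : K ≠ i := by
        intro h
        apply hik
        rw [← h]
      have hcc' : c ≠ c' := by
        intro hcc
        apply hc0
        rw [hcc]
        exact h3 K hKi
      have hrc' : r c' = 0 := by
        rw [show r c' = -(A K c' / A K c) by simp [hr, hcc'.symm], h3 K hKi]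
        simp
      have hvi : v i = 0 := hvge i hi
      have hBrow : ∀ j, B i j = A i j := by
        intro j
        rw [hB, hvi, zero_mul, add_zero, hM₁, h2 c hcc', zero_mul, add_zero]
      have hM₁c' : ∀ x, M₁ x c' = A x c' := by
        intro x
        rw [hM₁, hrc', mul_zero, add_zero]
      refine ⟨c', ?_, ?_, ?_⟩
      · rw [hBrow]; exact h1
      · intro j hj; rw [hBrow]; exact h2 j hj
      · intro i'' hi''
        rw [hB, hM₁c', hM₁c', h3 i'' hi'', h3 K hKi, mul_zero, add_zero]

lemma Uni.one : Uni (1 : Matrix (Fin n) (Fin n) ℚ_[p]) := by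
  constructor
  · intro i; exact Matrix.one_apply_eq i
  · intro i j h; exact Matrix.one_apply_ne (ne_of_gt h)

lemma main_rec : ∀ k : ℕ, ∀ M : GL (Fin n) ℚ_[p],
    Settled k (M : Matrix (Fin n) (Fin n) ℚ_[p]) →
    ∃ u jj M' : GL (Fin n) ℚ_[p],
      Uni (u : Matrix (Fin n) (Fin n) ℚ_[p]) ∧
      Iwa (jj : Matrix (Fin n) (Fin n) ℚ_[p]) ∧
      Iwa ((jj⁻¹ : GL (Fin n) ℚ_[p]) : Matrix (Fin n) (Fin n) ℚ_[p]) ∧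
      Settled 0 (M' : Matrix (Fin n) (Fin n) ℚ_[p]) ∧ M = u * M' * jj := by
  intro k
  induction k with
  | zero =>
    intro M h
    refine ⟨1, 1, M, ?_, ?_, ?_, h, by group⟩
    · rw [Matrix.GeneralLinearGroup.coe_one]; exact Uni.one
    · rw [Matrix.GeneralLinearGroup.coe_one]; exact Iwa.one
    · rw [inv_one, Matrix.GeneralLinearGroup.coe_one]; exact Iwa.one
  | succ k ih =>
    intro M h
    by_cases hk : k < n
    · obtain ⟨U, Jm, hU1, hU2, hJ1, hJ2, hS⟩ := pivot_step k hk M h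
      obtain ⟨u, jj, M', hu, hj1, hj2, hS0, heq⟩ := ih (U * M * Jm) hS
      refine ⟨U⁻¹ * u, jj * Jm⁻¹, M', ?_, ?_, ?_, hS0, ?_⟩
      · rw [Matrix.GeneralLinearGroup.coe_mul]
        exact Uni.mul hU2 hu
      · rw [Matrix.GeneralLinearGroup.coe_mul]
        exact Iwa.mul hj1 hJ2
      · rw [_root_.mul_inv_rev, inv_inv, Matrix.GeneralLinearGroup.coe_mul]
        exact Iwa.mul hJ1 hj2
      · have h2 : M = U⁻¹ * (U * M * Jm) * Jm⁻¹ := by group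
        rw [h2, heq]
        group
    · apply ih
      intro i hi
      exact absurd (lt_of_lt_of_le i.isLt (Nat.not_lt.1 hk)) (Nat.not_lt.2 hi)

end BIAux

/-- Bruhat–Iwahori decomposition: every `g ∈ GL_n(ℚ_p)` can be written as
`g = u·d·w_σ·j` with `u ∈ N` upper unitriangular, `d ∈ T` diagonal, `σ ∈ S_n`, `j ∈ J`. -/
theorem bruhat_iwahori_decomposition (hn : 2 ≤ n) (g : GL (Fin n) ℚ_[p]) :
    ∃ u ∈ Nset p n, ∃ d ∈ Tset p n, ∃ σ : Equiv.Perm (Fin n), ∃ j ∈ Jset p n,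
      g = u * d * permGL p n σ * j := by
  classical
  obtain ⟨u, jj, M', hu, hj1, hj2, hS0, heq⟩ :=
    main_rec n g (fun i hi => absurd i.isLt (Nat.not_lt.2 hi))
  choose c hc1 hc2 hc3 using fun i : Fin n => hS0 i (Nat.zero_le _)
  have hinj : Function.Injective c := by
    intro i i' hcc
    by_contra hne
    have h0 : (M' : Matrix (Fin n) (Fin n) ℚ_[p]) i' (c i') = 0 := by
      rw [← hcc]
      exact hc3 i i' (fun h => hne h.symm)
    exact hc1 i' h0
  have hbij : Function.Bijective c := Finite.injective_iff_bijective.1 hinj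
  set τ := Equiv.ofBijective c hbij with hτ
  set σ : Equiv.Perm (Fin n) := τ.symm with hσ
  set m : Fin n → ℚ_[p] := fun i => (M' : Matrix (Fin n) (Fin n) ℚ_[p]) i (c i) with hm
  have hm0 : ∀ i, m i ≠ 0 := hc1
  have hd1 : Matrix.diagonal m * Matrix.diagonal (fun i => (m i)⁻¹) = 1 := by
    rw [Matrix.diagonal_mul_diagonal,
      show (fun i => m i * (m i)⁻¹) = (fun _ => (1 : ℚ_[p])) from
        funext fun i => mul_inv_cancel₀ (hm0 i), Matrix.diagonal_one]
  have hd2 : Matrix.diagonal (fun i => (m i)⁻¹) * Matrix.diagonal m = 1 := by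
    rw [Matrix.diagonal_mul_diagonal,
      show (fun i => (m i)⁻¹ * m i) = (fun _ => (1 : ℚ_[p])) from
        funext fun i => inv_mul_cancel₀ (hm0 i), Matrix.diagonal_one]
  set d : GL (Fin n) ℚ_[p] := ⟨Matrix.diagonal m, Matrix.diagonal (fun i => (m i)⁻¹), hd1, hd2⟩
    with hd
  have hdval : (d : Matrix (Fin n) (Fin n) ℚ_[p]) = Matrix.diagonal m := rfl
  have hτa : ∀ i, τ i = c i := fun i => rfl
  have hσc : ∀ i, σ (c i) = i := by
    intro i
    rw [hσ, ← hτa i, Equiv.symm_apply_apply]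
  have hperm : ∀ a b : Fin n, (Equiv.Perm.permMatrix ℚ_[p] σ) a b = if σ a = b then 1 else 0 := by
    intro a b
    simp [Equiv.Perm.permMatrix, PEquiv.toMatrix_apply, Equiv.toPEquiv_apply]
  have hMd : M' = d * permGL p n σ := by
    refine Matrix.GeneralLinearGroup.ext fun i j => ?_
    rw [Matrix.GeneralLinearGroup.coe_mul, hdval,
      show (permGL p n σ : Matrix (Fin n) (Fin n) ℚ_[p]) = (Equiv.Perm.permMatrix ℚ_[p] σ)ᵀ from rfl,
      Matrix.diagonal_mul, Matrix.transpose_apply, hperm]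
    by_cases hj : j = c i
    · subst hj
      rw [if_pos (hσc i), mul_one]
    · have : ¬ σ j = i := by
        intro hsj
        apply hj
        have := hσc i
        exact σ.injective (by rw [hsj, this])
      rw [if_neg this, mul_zero]
      exact hc2 i j hj
  refine ⟨u, ⟨hu.1, hu.2⟩, d, ?_, σ, jj, ⟨hj1.1, hj2.1, hj1.2⟩, ?_⟩
  · intro i j hij
    show (d : Matrix (Fin n) (Fin n) ℚ_[p]) i j = 0
    rw [hdval]
    exact Matrix.diagonal_apply_ne m hij
  · rw [heq, hMd, ← mul_assoc]
end
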